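/- Define h(t0,t1,t5,t6) := max{|t0⁴t5|, |t0⁴t1|, |t1t5²t6² + t0²t1²t6|, |t0²t1t5t6|, |t0²t5²t6 + t0⁴t1|, |t5³t6² + t0²t1t5t6|} for real t0,t1,t5,t6. Then for fixed t0 > 0, t5 ≠ 0, t6 ≠ 0, the function g0(t0,t5,t6) := measure of {t1 ∈ ℝ : h(t0,t1,t5,t6) ≤ 1} satisfies g0(t0,t5,t6) ≤ C / (t0·|t6|^{1/2}) for some absolute constant C. -/

import Mathlib

open MeasureTheory

lemma quad_measure (a b : ℝ) (ha : a ≠ 0) :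
    volume {x : ℝ | |a * x ^ 2 + b * x| ≤ 1} ≤ ENNReal.ofReal (2 * Real.sqrt (2 / |a|)) := by
  set r := b / (2 * a) with hr
  set c := b ^ 2 / (4 * a) with hc
  have key : ∀ x : ℝ, a * x ^ 2 + b * x = a * (x + r) ^ 2 - c := by
    intro x; rw [hr, hc]; field_simp; ring
  set u := min ((c - 1) / a) ((c + 1) / a) with hu
  set v := max ((c - 1) / a) ((c + 1) / a) with hv
  have huv : u ≤ v := min_le_max
  have hL : v - u = 2 / |a| := by
    rw [hv, hu, max_sub_min_eq_abs]
    rw [div_sub_div_same]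
    have h2 : c + 1 - (c - 1) = 2 := by ring
    rw [h2, abs_div]
    simp
  set u' := max u 0 with hu'
  set v' := max v 0 with hv'
  have hdiff : v' - u' ≤ v - u := by
    rcases le_total u 0 with h1 | h1 <;> rcases le_total v 0 with h2 | h2 <;>
      simp [hu', hv', max_eq_left, max_eq_right, h1, h2] <;> linarith
  have hsub : {x : ℝ | |a * x ^ 2 + b * x| ≤ 1} ⊆
      Set.Icc (-r - Real.sqrt v') (-r - Real.sqrt u') ∪
      Set.Icc (-r + Real.sqrt u') (-r + Real.sqrt v') := by
    intro x hx
    simp only [Set.mem_setOf_eq, key x, abs_le] at hx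
    set y := x + r with hy
    have h1 : c - 1 ≤ a * y ^ 2 := by linarith [hx.1]
    have h2 : a * y ^ 2 ≤ c + 1 := by linarith [hx.2]
    have hyu : u ≤ y ^ 2 := by
      rcases ha.lt_or_gt with h | h
      · refine min_le_of_right_le ?_
        rw [div_le_iff_of_neg h]; nlinarith
      · refine min_le_of_left_le ?_
        rw [div_le_iff₀ h]; nlinarith
    have hyv : y ^ 2 ≤ v := by
      rcases ha.lt_or_gt with h | h
      · refine le_max_of_le_left ?_
        rw [le_div_iff_of_neg h]; nlinarith
      · refine le_max_of_le_right ?_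
        rw [le_div_iff₀ h]; nlinarith
    have hyv' : |y| ≤ Real.sqrt v' := by
      apply Real.abs_le_sqrt
      exact hyv.trans (le_max_left _ _)
    have hyu' : Real.sqrt u' ≤ |y| := by
      have : u' ≤ y ^ 2 := max_le hyu (sq_nonneg y)
      calc Real.sqrt u' ≤ Real.sqrt (y ^ 2) := Real.sqrt_le_sqrt this
        _ = |y| := Real.sqrt_sq_eq_abs y
    rcases le_total 0 y with h | h
    · right
      rw [abs_of_nonneg h] at hyv' hyu'
      constructor <;> simp only [hy] at * <;> linarith
    · left
      rw [abs_of_nonpos h] at hyv' hyu'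
      constructor <;> simp only [hy] at * <;> linarith
  have hd : Real.sqrt v' - Real.sqrt u' ≤ Real.sqrt (2 / |a|) := by
    have h2a : (0:ℝ) ≤ 2 / |a| := by positivity
    have hu0 : (0:ℝ) ≤ u' := le_max_right _ _
    have hv0 : (0:ℝ) ≤ v' := le_max_right _ _
    have e1 := Real.sq_sqrt h2a
    have e2 := Real.sq_sqrt hu0
    have e3 := Real.sq_sqrt hv0
    have e4 : Real.sqrt u' ≤ Real.sqrt v' :=
      Real.sqrt_le_sqrt (max_le_max_right 0 huv)
    have e5 := Real.sqrt_nonneg (2 / |a|)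
    have e6 := Real.sqrt_nonneg u'
    nlinarith [hdiff, hL]
  calc volume {x : ℝ | |a * x ^ 2 + b * x| ≤ 1}
      ≤ volume (Set.Icc (-r - Real.sqrt v') (-r - Real.sqrt u')) +
        volume (Set.Icc (-r + Real.sqrt u') (-r + Real.sqrt v')) :=
        (measure_mono hsub).trans (measure_union_le _ _)
    _ = ENNReal.ofReal (Real.sqrt v' - Real.sqrt u') +
        ENNReal.ofReal (Real.sqrt v' - Real.sqrt u') := by
        rw [Real.volume_Icc, Real.volume_Icc]; ring_nf
    _ ≤ ENNReal.ofReal (2 * Real.sqrt (2 / |a|)) := by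
        refine le_trans (add_le_add (ENNReal.ofReal_le_ofReal hd)
          (ENNReal.ofReal_le_ofReal hd)) ?_
        rw [← ENNReal.ofReal_add (Real.sqrt_nonneg _) (Real.sqrt_nonneg _)]
        exact ENNReal.ofReal_le_ofReal (by ring_nf; rfl)

noncomputable def h (t0 t1 t5 t6 : ℝ) : ℝ :=
  max (|t0 ^ 4 * t5|) (max (|t0 ^ 4 * t1|)
    (max (|t1 * t5 ^ 2 * t6 ^ 2 + t0 ^ 2 * t1 ^ 2 * t6|)
      (max (|t0 ^ 2 * t1 * t5 * t6|)
        (max (|t0 ^ 2 * t5 ^ 2 * t6 + t0 ^ 4 * t1|)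
          (|t5 ^ 3 * t6 ^ 2 + t0 ^ 2 * t1 * t5 * t6|)))))

noncomputable def g0 (t0 t5 t6 : ℝ) : ℝ :=
  (volume {t1 : ℝ | h t0 t1 t5 t6 ≤ 1}).toReal

theorem g0_bound :
    ∃ C : ℝ, 0 < C ∧ ∀ t0 t5 t6 : ℝ, 0 < t0 → t5 ≠ 0 → t6 ≠ 0 →
      g0 t0 t5 t6 ≤ C / (t0 * |t6| ^ ((1 : ℝ) / 2)) := by
  refine ⟨3, by norm_num, fun t0 t5 t6 h0 h5 h6 => ?_⟩
  set a := t0 ^ 2 * t6 with ha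
  set b := t5 ^ 2 * t6 ^ 2 with hb
  have ha0 : a ≠ 0 := by positivity
  have hsub : {t1 : ℝ | h t0 t1 t5 t6 ≤ 1} ⊆ {x : ℝ | |a * x ^ 2 + b * x| ≤ 1} := by
    intro x hx
    simp only [Set.mem_setOf_eq, h, max_le_iff] at hx ⊢
    have h3 := hx.2.2.1
    have : a * x ^ 2 + b * x = x * t5 ^ 2 * t6 ^ 2 + t0 ^ 2 * x ^ 2 * t6 := by
      rw [ha, hb]; ring
    rwa [this]
  have hm := (measure_mono hsub).trans (quad_measure a b ha0)
  have habs : |a| = t0 ^ 2 * |t6| := by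
    rw [ha, abs_mul, abs_of_pos (by positivity : (0:ℝ) < t0 ^ 2)]
  have hs : Real.sqrt (2 / |a|) = Real.sqrt 2 / (t0 * Real.sqrt |t6|) := by
    rw [habs, Real.sqrt_div (by norm_num : (0:ℝ) ≤ 2),
      Real.sqrt_mul (sq_nonneg t0), Real.sqrt_sq h0.le]
  have hg : g0 t0 t5 t6 ≤ 2 * Real.sqrt (2 / |a|) :=
    ENNReal.toReal_le_of_le_ofReal (by positivity) hm
  have hrpow : |t6| ^ ((1 : ℝ) / 2) = Real.sqrt |t6| := (Real.sqrt_eq_rpow _).symm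
  rw [hrpow]
  have hD : 0 < t0 * Real.sqrt |t6| := by
    have : 0 < |t6| := abs_pos.mpr h6
    have := Real.sqrt_pos.mpr this
    positivity
  refine hg.trans ?_
  rw [hs, mul_div_assoc']
  gcongr
  nlinarith [Real.sq_sqrt (by norm_num : (0:ℝ) ≤ 2), Real.sqrt_nonneg 2]
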